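/- The sequence a_m := (1/m) · Σ_{j=1}^m (1 − (1 − 1/m)^j) satisfies a_m > 1/e for every m ≥ 1 and a_m → 1/e as m → ∞. -/

import Mathlib

open Finset Filter Real

lemma greedy_tel_sum (m : ℕ) (hm : 1 ≤ m) :
    ∑ j ∈ Finset.Icc 1 m, (Real.exp (-((j:ℝ)-1)/m) - Real.exp (-(j:ℝ)/m))
      = 1 - Real.exp (-1) := by
  have hm0 : (m:ℝ) ≠ 0 := Nat.cast_ne_zero.2 (by omega)
  rw [← Finset.Ico_add_one_right_eq_Icc, Finset.sum_Ico_eq_sum_range]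
  simp only [Nat.succ_sub_one, Nat.add_sub_cancel, Nat.add_sub_cancel_left, add_tsub_cancel_right, add_tsub_cancel_left]
  have h : ∀ k ∈ Finset.range m,
      Real.exp (-(((1+k:ℕ):ℝ)-1)/m) - Real.exp (-((1+k:ℕ):ℝ)/m)
      = Real.exp (-((k:ℕ):ℝ)/m) - Real.exp (-(((k+1:ℕ)):ℝ)/m) := by
    intro k hk
    push_cast
    ring_nf
  rw [Finset.sum_congr rfl h, Finset.sum_range_sub' (fun k => Real.exp (-((k:ℕ):ℝ)/m))]
  simp [neg_div, div_self hm0]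

lemma greedy_closed_form (m : ℕ) (hm : 1 ≤ m) :
    (1 / (m : ℝ)) * ∑ j ∈ Finset.Icc 1 m, (1 - (1 - 1 / (m : ℝ)) ^ j)
      = 1/(m:ℝ) + (1 - 1/(m:ℝ))^(m+1) := by
  have hm0 : (m:ℝ) ≠ 0 := Nat.cast_ne_zero.2 (by omega)
  have hq1 : (1 - 1/(m:ℝ)) ≠ 1 := by
    intro h
    have : (1:ℝ)/m = 0 := by linarith
    simp [hm0] at this
  have hgeom : ∑ j ∈ Finset.range (m+1), (1 - 1/(m:ℝ))^j
      = ((1 - 1/(m:ℝ))^(m+1) - 1)/((1 - 1/(m:ℝ)) - 1) := geom_sum_eq hq1 (m+1)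
  have hsum : ∑ j ∈ Finset.Icc 1 m, (1 - 1/(m:ℝ))^j
      = ((1 - 1/(m:ℝ))^(m+1) - 1)/((1 - 1/(m:ℝ)) - 1) - 1 := by
    rw [← Finset.Ico_add_one_right_eq_Icc, Finset.sum_Ico_eq_sub _ (by omega), hgeom]
    simp
  rw [Finset.sum_sub_distrib, hsum, Finset.sum_const, Nat.card_Icc]
  have hden : (1 - 1/(m:ℝ)) - 1 = -(1/(m:ℝ)) := by ring
  rw [hden]
  have hm1 : (1:ℝ)/m ≠ 0 := one_div_ne_zero hm0
  field_simp
  simp only [Nat.add_sub_cancel, Nat.add_sub_cancel_left, add_tsub_cancel_right, add_tsub_cancel_left]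
  ring

lemma greedy_lower (m : ℕ) (hm : 1 ≤ m) :
    (m:ℝ) * Real.exp (-1) < ∑ j ∈ Finset.Icc 1 m, (1 - (1 - 1 / (m : ℝ)) ^ j) := by
  have hm0 : (0:ℝ) < m := by exact_mod_cast hm
  have hm0' : (m:ℝ) ≠ 0 := ne_of_gt hm0
  have key : ∑ j ∈ Finset.Icc 1 m,
      (1 - (m:ℝ) * (Real.exp (-((j:ℝ)-1)/m) - Real.exp (-(j:ℝ)/m)))
      < ∑ j ∈ Finset.Icc 1 m, (1 - (1 - 1 / (m : ℝ)) ^ j) := by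
    apply Finset.sum_lt_sum_of_nonempty
    · exact Finset.nonempty_Icc.2 hm
    · intro j hj
      simp only [Finset.mem_Icc] at hj
      have hj1 : 1 ≤ j := hj.1
      have hj0 : j ≠ 0 := by omega
      -- q^j < exp(-j/m)
      have hq0 : (0:ℝ) ≤ 1 - 1/(m:ℝ) := by
        have : (1:ℝ)/m ≤ 1 := by
          rw [div_le_one hm0]; exact_mod_cast hm
        linarith
      have hlt : 1 - 1/(m:ℝ) < Real.exp (-(1/(m:ℝ))) := by
        have hne : -(1/(m:ℝ)) ≠ 0 := neg_ne_zero.2 (one_div_ne_zero hm0')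
        have h := Real.add_one_lt_exp hne
        linarith
      have hpow : (1 - 1/(m:ℝ))^j < Real.exp (-(1/(m:ℝ)))^j :=
        pow_lt_pow_left₀ hlt hq0 hj0
      have hexpj : Real.exp (-(1/(m:ℝ)))^j = Real.exp (-(j:ℝ)/m) := by
        rw [← Real.exp_nat_mul]
        congr 1
        ring
      -- exp(-j/m) ≤ m * (exp(-(j-1)/m) - exp(-j/m))
      have hsplit : Real.exp (-((j:ℝ)-1)/m) = Real.exp (-(j:ℝ)/m) * Real.exp (1/(m:ℝ)) := by
        rw [← Real.exp_add]
        congr 1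
        field_simp
        ring
      have hepos : (0:ℝ) < Real.exp (-(j:ℝ)/m) := Real.exp_pos _
      have hle : Real.exp (-(j:ℝ)/m)
          ≤ (m:ℝ) * (Real.exp (-((j:ℝ)-1)/m) - Real.exp (-(j:ℝ)/m)) := by
        rw [hsplit]
        have : (1:ℝ) ≤ (m:ℝ) * (Real.exp (1/(m:ℝ)) - 1) := by
          have h := Real.add_one_le_exp (1/(m:ℝ))
          have : (1:ℝ)/m ≤ Real.exp (1/(m:ℝ)) - 1 := by linarith
          calc (1:ℝ) = (m:ℝ) * (1/m) := by field_simp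
          _ ≤ (m:ℝ) * (Real.exp (1/(m:ℝ)) - 1) := by
              exact mul_le_mul_of_nonneg_left this (le_of_lt hm0)
        nlinarith
      have : (1 - 1/(m:ℝ))^j < (m:ℝ) * (Real.exp (-((j:ℝ)-1)/m) - Real.exp (-(j:ℝ)/m)) := by
        calc (1 - 1/(m:ℝ))^j < Real.exp (-(j:ℝ)/m) := hexpj ▸ hpow
        _ ≤ _ := hle
      linarith
  have hleft : ∑ j ∈ Finset.Icc 1 m,
      (1 - (m:ℝ) * (Real.exp (-((j:ℝ)-1)/m) - Real.exp (-(j:ℝ)/m)))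
      = (m:ℝ) * Real.exp (-1) := by
    rw [Finset.sum_sub_distrib, ← Finset.mul_sum, greedy_tel_sum m hm,
      Finset.sum_const, Nat.card_Icc]
    simp only [Nat.add_sub_cancel, nsmul_eq_mul, mul_one]
    ring
  linarith [key, hleft.symm ▸ key]

/-- The sequence `a_m = (1/m) ∑_{j=1}^m (1 − (1 − 1/m)^j)` satisfies `a_m > 1/e`
for every `m ≥ 1` and `a_m → 1/e` as `m → ∞`. -/
theorem greedy_factor_tendsto (a : ℕ → ℝ)
    (ha : ∀ m, a m = (1 / (m : ℝ)) * ∑ j ∈ Finset.Icc 1 m, (1 - (1 - 1 / (m : ℝ)) ^ j)) :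
    (∀ m, 1 ≤ m → 1 / Real.exp 1 < a m) ∧
      Filter.Tendsto a Filter.atTop (nhds (1 / Real.exp 1)) := by
  constructor
  · intro m hm
    have hm0 : (0:ℝ) < m := by exact_mod_cast hm
    rw [ha m]
    have h := greedy_lower m hm
    have h2 : 1/Real.exp 1 = (1/(m:ℝ)) * ((m:ℝ) * Real.exp (-1)) := by
      rw [Real.exp_neg]
      field_simp
    rw [h2]
    exact mul_lt_mul_of_pos_left h (by positivity)
  · have heq : ∀ᶠ m in atTop, (fun m : ℕ => 1/(m:ℝ) + (1 - 1/(m:ℝ))^(m+1)) m = a m := by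
      filter_upwards [eventually_ge_atTop 1] with m hm
      rw [ha m, greedy_closed_form m hm]
    apply Filter.Tendsto.congr' heq
    have h1 : Tendsto (fun m : ℕ => 1/(m:ℝ)) atTop (nhds 0) :=
      tendsto_one_div_atTop_nhds_zero_nat
    have h2 : Tendsto (fun m : ℕ => (1 - 1/(m:ℝ))^m) atTop (nhds (Real.exp (-1))) := by
      have := Real.tendsto_one_add_div_pow_exp (-1)
      refine this.congr (fun m => ?_)
      congr 1
      ring
    have h3 : Tendsto (fun m : ℕ => 1 - 1/(m:ℝ)) atTop (nhds 1) := by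
      simpa using (tendsto_const_nhds (x := (1:ℝ)) (f := atTop (α := ℕ))).sub h1
    have h4 : Tendsto (fun m : ℕ => (1 - 1/(m:ℝ))^(m+1)) atTop (nhds (Real.exp (-1))) := by
      have := h2.mul h3
      simp only [mul_one] at this
      refine this.congr (fun m => ?_)
      rw [pow_succ]
    have := h1.add h4
    simp only [zero_add] at this
    convert this using 2
    rw [Real.exp_neg, one_div]
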